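/- arXiv:2103.02143 — 2 statements merged into one kernel-verified Lean document; each statement's English description precedes it below -/
import Mathlib

section
/- Let σ > 0, let D ≥ 1, and let w_1, …, w_D be independent random vectors in ℝ^d whose coordinates are independent real Gaussian random variables with mean 0 and variance 1/σ². Then for all x, y ∈ ℝ^d, exp(x·y / σ²) = exp(‖x‖²/(2σ²) + ‖y‖²/(2σ²)) · E[φ(x) · φ(y)]; that is, exp(‖x‖²/(2σ²) + ‖y‖²/(2σ²)) · φ(x) · φ(y) is an unbiased estimator of exp(x·y/σ²). -/
open scoped RealInnerProductSpace BigOperators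
open MeasureTheory ProbabilityTheory
open scoped NNReal ENNReal

section Aux

open Real Complex

/-- Gaussian-type cosine integral. -/
lemma rfa_integral_exp_neg_mul_sq_mul_cos {a : ℝ} (ha : 0 < a) (t : ℝ) :
    ∫ x : ℝ, Real.exp (-a * x ^ 2) * Real.cos (t * x) =
      Real.sqrt (π / a) * Real.exp (-t ^ 2 / (4 * a)) := by
  have hb : (-(a : ℂ)).re < 0 := by simpa using ha
  have h := integral_cexp_quadratic hb (t * Complex.I) 0
  have hint := integrable_cexp_quadratic' hb (t * Complex.I) 0
  have hre : ∀ x : ℝ, Real.exp (-a * x ^ 2) * Real.cos (t * x)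
      = (Complex.exp (-(a : ℂ) * (x : ℂ) ^ 2 + (t * Complex.I) * (x : ℂ) + 0)).re := by
    intro x
    have h1 : (-(a : ℂ) * (x : ℂ) ^ 2 + (t * Complex.I) * (x : ℂ) + 0)
        = ((-a * x ^ 2 : ℝ) : ℂ) + ((t * x : ℝ) : ℂ) * Complex.I := by
      push_cast; ring
    rw [h1, Complex.exp_re]
    simp [← Complex.ofReal_pow]
  calc ∫ x : ℝ, Real.exp (-a * x ^ 2) * Real.cos (t * x)
      = ∫ x : ℝ, (Complex.exp (-(a : ℂ) * (x : ℂ) ^ 2 + (t * Complex.I) * (x : ℂ) + 0)).re := by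
        simp_rw [hre]
    _ = (∫ x : ℝ, Complex.exp (-(a : ℂ) * (x : ℂ) ^ 2 + (t * Complex.I) * (x : ℂ) + 0)).re := by
        rw [← RCLike.re_to_complex]
        rw [← integral_re hint]
        simp
    _ = Real.sqrt (π / a) * Real.exp (-t ^ 2 / (4 * a)) := by
        rw [h]
        have h1 : ((π : ℂ) / -(-(a : ℂ))) ^ (1 / 2 : ℂ) = ((Real.sqrt (π / a) : ℝ) : ℂ) := by
          rw [neg_neg, Real.sqrt_eq_rpow,
            show ((π : ℂ) / (a : ℂ)) = ((π / a : ℝ) : ℂ) by push_cast; ring,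
            show (1 / 2 : ℂ) = ((1 / 2 : ℝ) : ℂ) by norm_num,
            ← Complex.ofReal_cpow (by positivity) (1 / 2 : ℝ)]
        have h2 : (0 : ℂ) - (t * Complex.I) ^ 2 / (4 * -(a : ℂ)) = ((-t ^ 2 / (4 * a) : ℝ) : ℂ) := by
          have : ((t : ℂ) * Complex.I) ^ 2 = -(t : ℂ) ^ 2 := by
            rw [mul_pow, Complex.I_sq]; ring
          rw [this]
          have ha' : (a : ℂ) ≠ 0 := by exact_mod_cast ha.ne'
          field_simp
          push_cast
          field_simp
          ring
        rw [h1, h2, ← Complex.ofReal_exp, ← Complex.ofReal_mul, Complex.ofReal_re]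

lemma rfa_integral_cos_gaussianReal (v : ℝ≥0) (t : ℝ) :
    ∫ u, Real.cos (t * u) ∂(gaussianReal 0 v) = Real.exp (-(t ^ 2 * v) / 2) := by
  rcases eq_or_ne v 0 with rfl | hv
  · simp [gaussianReal_zero_var]
  have hv' : (0 : ℝ) < (v : ℝ) := lt_of_le_of_ne (v.coe_nonneg) (by exact_mod_cast (Ne.symm hv))
  rw [gaussianReal_of_var_ne_zero _ hv]
  have hpdf : gaussianPDF 0 v = fun x => ((Real.toNNReal (gaussianPDFReal 0 v x) : ℝ≥0) : ℝ≥0∞) := by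
    funext x
    rfl
  rw [hpdf, integral_withDensity_eq_integral_smul
    ((measurable_gaussianPDFReal 0 v).real_toNNReal) _]
  have ha : (0 : ℝ) < (2 * (v : ℝ))⁻¹ := by positivity
  have hcongr : ∀ x : ℝ, (Real.toNNReal (gaussianPDFReal 0 v x)) • Real.cos (t * x)
      = (Real.sqrt (2 * π * v))⁻¹ * (Real.exp (-(2 * (v : ℝ))⁻¹ * x ^ 2) * Real.cos (t * x)) := by
    intro x
    rw [NNReal.smul_def, smul_eq_mul, Real.coe_toNNReal _ (gaussianPDFReal_nonneg 0 v x)]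
    rw [gaussianPDFReal]
    have : -(x - 0) ^ 2 / (2 * (v : ℝ)) = -(2 * (v : ℝ))⁻¹ * x ^ 2 := by
      field_simp
      ring
    rw [this]
    ring
  simp_rw [hcongr]
  rw [integral_const_mul, rfa_integral_exp_neg_mul_sq_mul_cos ha t]
  have h4 : -t ^ 2 / (4 * (2 * (v : ℝ))⁻¹) = -(t ^ 2 * v) / 2 := by
    field_simp
    ring
  have hsqrt : π / (2 * (v : ℝ))⁻¹ = 2 * π * v := by
    field_simp
  rw [h4, hsqrt, ← mul_assoc, inv_mul_cancel₀ (by positivity), one_mul]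

lemma rfa_integral_sin_gaussianReal (v : ℝ≥0) (t : ℝ) :
    ∫ u, Real.sin (t * u) ∂(gaussianReal 0 v) = 0 := by
  have hmap : (gaussianReal 0 v).map (fun u => -u) = gaussianReal 0 v := by
    have h := gaussianReal_map_const_mul (μ := 0) (v := v) (-1)
    have hfun : (fun u : ℝ => -u) = (fun u : ℝ => (-1 : ℝ) * u) := by funext u; ring
    rw [hfun, h]
    congr 1
    · ring
    · ext
      norm_num
  have hint : Integrable (fun u => Real.sin (t * u)) (gaussianReal 0 v) := by
    refine (integrable_const (1 : ℝ)).mono'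
      ((Real.measurable_sin.comp (measurable_const_mul t)).aestronglyMeasurable) ?_
    exact ae_of_all _ fun u => by simpa using Real.abs_sin_le_one (t * u)
  have h1 : ∫ u, Real.sin (t * u) ∂(gaussianReal 0 v)
      = ∫ u, Real.sin (t * (-u)) ∂(gaussianReal 0 v) := by
    conv_lhs => rw [← hmap]
    rw [integral_map measurable_neg.aemeasurable
      (by exact (Real.measurable_sin.comp (measurable_const_mul t)).aestronglyMeasurable)]
  have h2 : ∀ u : ℝ, Real.sin (t * (-u)) = -Real.sin (t * u) := by
    intro u
    rw [show t * (-u) = -(t * u) by ring, Real.sin_neg]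
  simp_rw [h2] at h1
  rw [integral_neg] at h1
  linarith

/-- transfer of joint independence along a.e. equality. -/
lemma rfa_iIndepFun_congr {ι Ω : Type*} [MeasurableSpace Ω] {μ : Measure Ω}
    {f g : ι → Ω → ℝ} (h : iIndepFun f μ)
    (hfg : ∀ i, f i =ᵐ[μ] g i) : iIndepFun g μ := by
  rw [iIndepFun_iff_measure_inter_preimage_eq_mul] at h ⊢
  intro S sets hsets
  have hS : ∀ᵐ ω ∂μ, ∀ i ∈ S, f i ω = g i ω :=
    (ae_ball_iff S.countable_toSet).2 fun i _ => hfg i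
  have h1 : μ (⋂ i ∈ S, g i ⁻¹' sets i) = μ (⋂ i ∈ S, f i ⁻¹' sets i) := by
    refine measure_congr ?_
    rw [Filter.eventuallyEq_set]
    filter_upwards [hS] with ω hω
    simp only [Set.mem_iInter, Set.mem_preimage]
    constructor
    · intro hmem i hi; rw [hω i hi]; exact hmem i hi
    · intro hmem i hi; rw [← hω i hi]; exact hmem i hi
  have h2 : ∀ i ∈ S, μ (g i ⁻¹' sets i) = μ (f i ⁻¹' sets i) := by
    intro i hi
    refine measure_congr ?_
    rw [Filter.eventuallyEq_set]
    filter_upwards [hfg i] with ω hω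
    simp [Set.mem_preimage, hω]
  rw [h1, h S hsets]
  exact (Finset.prod_congr rfl h2).symm

lemma rfa_integrable_of_le_one {Ω : Type*} [MeasurableSpace Ω] {μ : Measure Ω}
    [IsProbabilityMeasure μ] {f : Ω → ℝ} (hf : AEStronglyMeasurable f μ)
    (h : ∀ ω, |f ω| ≤ 1) : Integrable f μ :=
  (integrable_const (1 : ℝ)).mono' hf (ae_of_all _ fun ω => by simpa using h ω)

/-- Key independence computation: the expectation of the cosine of a linear combination of
independent centered Gaussians. -/
lemma rfa_integral_cos_sum {Ω : Type*} [MeasurableSpace Ω] {μ : Measure Ω}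
    [IsProbabilityMeasure μ] {ι : Type*} {X : ι → Ω → ℝ} (hX : ∀ i, Measurable (X i))
    (hindep : iIndepFun X μ)
    {v : ℝ≥0} (hlaw : ∀ i, Measure.map (X i) μ = gaussianReal 0 v)
    (c : ι → ℝ) (s : Finset ι) :
    ∫ ω, Real.cos (∑ k ∈ s, c k * X k ω) ∂μ
      = Real.exp (-(∑ k ∈ s, (c k) ^ 2) * v / 2) := by
  classical
  induction s using Finset.cons_induction with
  | empty => simp
  | cons a s ha ih =>
    have hBmeas : Measurable (fun ω => ∑ k ∈ s, c k * X k ω) :=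
      Finset.measurable_sum s fun k _ => (hX k).const_mul (c k)
    have hAmeas : Measurable (fun ω => c a * X a ω) := (hX a).const_mul (c a)
    -- independence of the new coordinate from the partial sum
    have hAB : IndepFun (fun ω => c a * X a ω) (fun ω => ∑ k ∈ s, c k * X k ω) μ := by
      have h := hindep.indepFun_finset {a} s (by simp [Finset.disjoint_left, ha]) hX
      have hφ : Measurable (fun f : ({x // x ∈ ({a} : Finset ι)} → ℝ) =>
          c a * f ⟨a, Finset.mem_singleton_self a⟩) :=
        (measurable_pi_apply _).const_mul _
      have hψ : Measurable (fun f : ({x // x ∈ s} → ℝ) => ∑ i ∈ s.attach, c i * f i) :=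
        Finset.measurable_sum _ fun i _ => (measurable_pi_apply i).const_mul _
      have h2 := h.comp hφ hψ
      have e1 : ((fun f : ({x // x ∈ ({a} : Finset ι)} → ℝ) => c a * f ⟨a, Finset.mem_singleton_self a⟩) ∘
          (fun ω (i : {x // x ∈ ({a} : Finset ι)}) => X i ω)) = fun ω => c a * X a ω := rfl
      have e2 : ((fun f : ({x // x ∈ s} → ℝ) => ∑ i ∈ s.attach, c i * f i) ∘
          (fun ω (i : {x // x ∈ s}) => X i ω)) = fun ω => ∑ k ∈ s, c k * X k ω := by
        funext ω
        simp only [Function.comp_apply]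
        rw [← Finset.sum_attach s (fun k => c k * X k ω)]
      rw [e1, e2] at h2
      exact h2
    have hcoscos : IndepFun (fun ω => Real.cos (c a * X a ω))
        (fun ω => Real.cos (∑ k ∈ s, c k * X k ω)) μ :=
      hAB.comp Real.measurable_cos Real.measurable_cos
    have hsinsin : IndepFun (fun ω => Real.sin (c a * X a ω))
        (fun ω => Real.sin (∑ k ∈ s, c k * X k ω)) μ :=
      hAB.comp Real.measurable_sin Real.measurable_sin
    have hint1 : Integrable (fun ω => Real.cos (c a * X a ω) *
        Real.cos (∑ k ∈ s, c k * X k ω)) μ := by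
      refine rfa_integrable_of_le_one
        ((Real.measurable_cos.comp hAmeas).mul (Real.measurable_cos.comp hBmeas)).aestronglyMeasurable
        fun ω => ?_
      rw [abs_mul]
      exact mul_le_one₀ (Real.abs_cos_le_one _) (abs_nonneg _) (Real.abs_cos_le_one _)
    have hint2 : Integrable (fun ω => Real.sin (c a * X a ω) *
        Real.sin (∑ k ∈ s, c k * X k ω)) μ := by
      refine rfa_integrable_of_le_one
        ((Real.measurable_sin.comp hAmeas).mul (Real.measurable_sin.comp hBmeas)).aestronglyMeasurable
        fun ω => ?_
      rw [abs_mul]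
      exact mul_le_one₀ (Real.abs_sin_le_one _) (abs_nonneg _) (Real.abs_sin_le_one _)
    have hcosA : ∫ ω, Real.cos (c a * X a ω) ∂μ = Real.exp (-((c a) ^ 2 * v) / 2) := by
      have hmap : ∫ u, (fun u : ℝ => Real.cos (c a * u)) u ∂(Measure.map (X a) μ)
          = ∫ ω, (fun u : ℝ => Real.cos (c a * u)) (X a ω) ∂μ :=
        integral_map (hX a).aemeasurable
          (Real.measurable_cos.comp (measurable_const_mul (c a))).aestronglyMeasurable
      rw [show (∫ ω, Real.cos (c a * X a ω) ∂μ)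
          = ∫ u, Real.cos (c a * u) ∂(Measure.map (X a) μ) from hmap.symm,
        hlaw a, rfa_integral_cos_gaussianReal]
    have hsinA : ∫ ω, Real.sin (c a * X a ω) ∂μ = 0 := by
      have hmap : ∫ u, (fun u : ℝ => Real.sin (c a * u)) u ∂(Measure.map (X a) μ)
          = ∫ ω, (fun u : ℝ => Real.sin (c a * u)) (X a ω) ∂μ :=
        integral_map (hX a).aemeasurable
          (Real.measurable_sin.comp (measurable_const_mul (c a))).aestronglyMeasurable
      rw [show (∫ ω, Real.sin (c a * X a ω) ∂μ)
          = ∫ u, Real.sin (c a * u) ∂(Measure.map (X a) μ) from hmap.symm,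
        hlaw a, rfa_integral_sin_gaussianReal]
    have hcosadd : ∀ ω, Real.cos (∑ k ∈ Finset.cons a s ha, c k * X k ω)
        = Real.cos (c a * X a ω) * Real.cos (∑ k ∈ s, c k * X k ω)
          - Real.sin (c a * X a ω) * Real.sin (∑ k ∈ s, c k * X k ω) := by
      intro ω
      rw [Finset.sum_cons, Real.cos_add]
    simp_rw [hcosadd]
    rw [integral_sub hint1 hint2,
      hcoscos.integral_fun_mul_eq_mul_integral
        (Real.measurable_cos.comp hAmeas).aestronglyMeasurable
        (Real.measurable_cos.comp hBmeas).aestronglyMeasurable,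
      hsinsin.integral_fun_mul_eq_mul_integral
        (Real.measurable_sin.comp hAmeas).aestronglyMeasurable
        (Real.measurable_sin.comp hBmeas).aestronglyMeasurable,
      hcosA, hsinA, ih, zero_mul, sub_zero, ← Real.exp_add, Finset.sum_cons]
    congr 1
    ring

end Aux

/-- The random feature map `φ(x) = D^{-1/2} (sin(w₁·x), …, sin(w_D·x), cos(w₁·x), …, cos(w_D·x))`. -/
noncomputable def randomFeatureMap {d D : ℕ} (w : Fin D → EuclideanSpace ℝ (Fin d))
    (x : EuclideanSpace ℝ (Fin d)) : EuclideanSpace ℝ (Fin D ⊕ Fin D) :=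
  WithLp.toLp 2 (fun i => Real.sqrt (1 / D) *
    Sum.elim (fun j => Real.sin ⟪w j, x⟫) (fun j => Real.cos ⟪w j, x⟫) i)

/-- Unbiased random feature estimate of the dot-then-exponentiate function: with `D ≥ 1` random
vectors `w₁, …, w_D ∈ ℝ^d` whose `D·d` coordinates are jointly independent `N(0, 1/σ²)` Gaussians,
`exp(x·y/σ²) = exp(‖x‖²/(2σ²) + ‖y‖²/(2σ²)) · E[φ(x) · φ(y)]`. -/
theorem exp_inner_eq_exp_norm_mul_expectation {d D : ℕ} (hD : 1 ≤ D) (σ : ℝ) (hσ : 0 < σ)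
    {Ω : Type*} [MeasurableSpace Ω] (μ : Measure Ω) [IsProbabilityMeasure μ]
    (W : Fin D → Ω → EuclideanSpace ℝ (Fin d))
    (hindep : iIndepFun
      (fun (p : Fin D × Fin d) ω => W p.1 ω p.2) μ)
    (hgauss : ∀ (i : Fin D) (j : Fin d),
      Measure.map (fun ω => W i ω j) μ = gaussianReal 0 ⟨1 / σ ^ 2, by positivity⟩)
    (x y : EuclideanSpace ℝ (Fin d)) :
    Real.exp (⟪x, y⟫ / σ ^ 2) =
      Real.exp (‖x‖ ^ 2 / (2 * σ ^ 2) + ‖y‖ ^ 2 / (2 * σ ^ 2)) *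
        ∫ ω, ⟪randomFeatureMap (fun i => W i ω) x, randomFeatureMap (fun i => W i ω) y⟫ ∂μ := by
  classical
  set v : ℝ≥0 := ⟨1 / σ ^ 2, by positivity⟩ with hv
  set z : EuclideanSpace ℝ (Fin d) := x - y with hz
  -- a.e. measurable coordinates
  have haem : ∀ p : Fin D × Fin d, AEMeasurable (fun ω => W p.1 ω p.2) μ := by
    intro p
    by_contra h
    have h0 := Measure.map_of_not_aemeasurable h
    rw [hgauss p.1 p.2] at h0
    exact (IsProbabilityMeasure.ne_zero (gaussianReal 0 v)) h0
  set X : Fin D × Fin d → Ω → ℝ := fun p => (haem p).mk _ with hXdef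
  have hXmeas : ∀ p, Measurable (X p) := fun p => (haem p).measurable_mk
  have hXae : ∀ p : Fin D × Fin d, (fun ω => W p.1 ω p.2) =ᵐ[μ] X p :=
    fun p => (haem p).ae_eq_mk
  have hXindep : iIndepFun X μ := rfa_iIndepFun_congr hindep hXae
  have hXlaw : ∀ p : Fin D × Fin d, Measure.map (X p) μ = gaussianReal 0 v := by
    intro p
    rw [← Measure.map_congr (hXae p)]
    exact hgauss p.1 p.2
  have hDpos : (0 : ℝ) < (D : ℝ) := by exact_mod_cast hD
  -- inner product with z as coordinate sum
  have hinner : ∀ (w : EuclideanSpace ℝ (Fin d)), ⟪w, z⟫ = ∑ k : Fin d, z k * w k := by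
    intro w
    rw [PiLp.inner_apply]
    exact Finset.sum_congr rfl fun k _ => by
      simp [RCLike.inner_apply, mul_comm]
  -- key expectation for each j
  have key : ∀ j : Fin D, ∫ ω, Real.cos (∑ k : Fin d, z k * X (j, k) ω) ∂μ
      = Real.exp (-‖z‖ ^ 2 / (2 * σ ^ 2)) := by
    intro j
    have hinj : Set.InjOn (fun k : Fin d => (j, k)) (Finset.univ : Finset (Fin d)) := by
      intro k₁ _ k₂ _ h
      exact (Prod.ext_iff.mp h).2
    have hsum : ∀ ω, ∑ k : Fin d, z k * X (j, k) ω
        = ∑ i ∈ (Finset.univ : Finset (Fin d)).image (fun k => (j, k)),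
            (fun p : Fin D × Fin d => z p.2) i * X i ω := by
      intro ω
      rw [Finset.sum_image (fun k₁ h₁ k₂ h₂ h => hinj h₁ h₂ h)]
    simp_rw [hsum]
    rw [rfa_integral_cos_sum hXmeas hXindep hXlaw]
    rw [Finset.sum_image (fun k₁ h₁ k₂ h₂ h => hinj h₁ h₂ h)]
    congr 1
    have hnorm : ‖z‖ ^ 2 = ∑ k : Fin d, (z k) ^ 2 := by
      rw [EuclideanSpace.norm_eq]
      rw [Real.sq_sqrt (Finset.sum_nonneg fun k _ => sq_nonneg _)]
      exact Finset.sum_congr rfl fun k _ => by rw [Real.norm_eq_abs, sq_abs]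
    have hvcoe : ((v : ℝ≥0) : ℝ) = 1 / σ ^ 2 := rfl
    rw [hnorm, hvcoe]
    ring
  -- pointwise inner product of feature maps
  have hφ : ∀ ω, ⟪randomFeatureMap (fun i => W i ω) x, randomFeatureMap (fun i => W i ω) y⟫
      = ∑ j : Fin D, (1 / (D : ℝ)) * Real.cos ⟪W j ω, z⟫ := by
    intro ω
    rw [PiLp.inner_apply, Fintype.sum_sum_type, ← Finset.sum_add_distrib]
    refine Finset.sum_congr rfl fun j _ => ?_
    simp only [randomFeatureMap, Sum.elim_inl, Sum.elim_inr, RCLike.inner_apply,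
      starRingEnd_apply, star_trivial]
    have hab : ⟪W j ω, z⟫ = ⟪W j ω, x⟫ - ⟪W j ω, y⟫ := by rw [hz, inner_sub_right]
    rw [hab, Real.cos_sub]
    have hsq : Real.sqrt (1 / (D : ℝ)) * Real.sqrt (1 / (D : ℝ)) = 1 / (D : ℝ) :=
      Real.mul_self_sqrt (by positivity)
    linear_combination (Real.sin ⟪W j ω, x⟫ * Real.sin ⟪W j ω, y⟫ +
      Real.cos ⟪W j ω, x⟫ * Real.cos ⟪W j ω, y⟫) * hsq
  -- a.e. rewrite to the measurable modification
  have hφae : (fun ω => ⟪randomFeatureMap (fun i => W i ω) x,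
      randomFeatureMap (fun i => W i ω) y⟫)
      =ᵐ[μ] fun ω => ∑ j : Fin D, (1 / (D : ℝ)) * Real.cos (∑ k : Fin d, z k * X (j, k) ω) := by
    have hall : ∀ᵐ ω ∂μ, ∀ p : Fin D × Fin d, W p.1 ω p.2 = X p ω :=
      ae_all_iff.2 fun p => hXae p
    filter_upwards [hall] with ω hω
    rw [hφ ω]
    refine Finset.sum_congr rfl fun j _ => ?_
    congr 1
    rw [hinner (W j ω)]
    exact congrArg Real.cos (Finset.sum_congr rfl fun k _ => by rw [hω (j, k)])
  -- compute the expectation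
  have hintegral : ∫ ω, ⟪randomFeatureMap (fun i => W i ω) x,
      randomFeatureMap (fun i => W i ω) y⟫ ∂μ = Real.exp (-‖z‖ ^ 2 / (2 * σ ^ 2)) := by
    rw [integral_congr_ae hφae]
    rw [integral_finset_sum]
    · have : ∀ j : Fin D, ∫ ω, (1 / (D : ℝ)) * Real.cos (∑ k : Fin d, z k * X (j, k) ω) ∂μ
          = (1 / (D : ℝ)) * Real.exp (-‖z‖ ^ 2 / (2 * σ ^ 2)) := by
        intro j
        rw [integral_const_mul, key j]
      simp_rw [this]
      rw [Finset.sum_const, Finset.card_univ, Fintype.card_fin, nsmul_eq_mul]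
      field_simp
    · intro j _
      refine Integrable.const_mul ?_ _
      refine rfa_integrable_of_le_one ?_ fun ω => Real.abs_cos_le_one _
      exact (Real.measurable_cos.comp
        (Finset.measurable_sum _ fun k _ => (hXmeas (j, k)).const_mul _)).aestronglyMeasurable
  rw [hintegral, ← Real.exp_add]
  congr 1
  have hns : ‖z‖ ^ 2 = ‖x‖ ^ 2 - 2 * ⟪x, y⟫ + ‖y‖ ^ 2 := norm_sub_sq_real x y
  rw [hns]
  have hσ2 : (σ : ℝ) ^ 2 ≠ 0 := by positivity
  field_simp
  ring
end

section
/- Let σ > 0, let D ≥ 1, and let w_1, …, w_D be independent random vectors in ℝ^d whose coordinates are independent real Gaussian random variables with mean 0 and variance 1/σ². Let q, k_1, …, k_M ∈ ℝ^d be unit vectors and v_1, …, v_M ∈ ℝ^d. Then E[Σ_{i=1}^M (φ(q) · φ(k_i)) v_i] = exp(−1/σ²) · Σ_{i=1}^M exp(q·k_i/σ²) v_i and E[φ(q) · Σ_{j=1}^M φ(k_j)] = exp(−1/σ²) · Σ_{j=1}^M exp(q·k_j/σ²); that is, the numerator and denominator of RFA are unbiased estimators of the numerator and denominator of softmax attention,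 up to the common positive factor exp(−1/σ²). -/
open scoped RealInnerProductSpace BigOperators
open MeasureTheory ProbabilityTheory

section RFAHelpers
open Real Complex
lemma gauss_char {v : NNReal} (hv : v ≠ 0) (t : ℝ) :
    ∫ x : ℝ, Complex.exp ((x * t : ℝ) * Complex.I) ∂(gaussianReal 0 v) =
      Complex.exp (-(v : ℝ) * t ^ 2 / 2) := by
  have hvpos : (0:ℝ) < v := lt_of_le_of_ne (v.coe_nonneg) (by exact_mod_cast (Ne.symm hv))
  have h2v : (0:ℝ) < 2 * π * v := by positivity
  rw [gaussianReal_of_var_ne_zero 0 hv]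
  have hpdf : gaussianPDF 0 v = fun x => ((Real.toNNReal (gaussianPDFReal 0 v x) : NNReal) : ENNReal) := by
    funext x
    simp [gaussianPDF, ENNReal.ofReal]
  rw [hpdf]
  rw [integral_withDensity_eq_integral_smul
    (by exact (measurable_gaussianPDFReal 0 v).real_toNNReal) _]
  have hb : (0:ℝ) < (1 / (2 * (v:ℝ))) := by positivity
  have key := fourierIntegral_gaussian (b := ((1 / (2 * (v:ℝ)) : ℝ) : ℂ))
    (by simpa using hb) (t : ℂ)
  have hEq : ∀ x : ℝ, (Real.toNNReal (gaussianPDFReal 0 v x)) • Complex.exp ((x * t : ℝ) * Complex.I)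
      = ((√(2 * π * v))⁻¹ : ℝ) • (Complex.exp (Complex.I * (t:ℂ) * (x:ℝ)) * Complex.exp (-((1 / (2 * (v:ℝ)) : ℝ) : ℂ) * (x:ℝ) ^ 2)) := by
    intro x
    rw [NNReal.smul_def, Real.coe_toNNReal _ (gaussianPDFReal_nonneg 0 v x)]
    rw [gaussianPDFReal]
    rw [mul_smul]
    congr 1
    rw [Complex.real_smul, Complex.ofReal_exp, ← Complex.exp_add, ← Complex.exp_add]
    congr 1
    have hvne : ((v:ℝ):ℂ) ≠ 0 := by exact_mod_cast hvpos.ne'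
    push_cast
    field_simp
    ring
  rw [integral_congr_ae (ae_of_all _ hEq), integral_smul, key]
  have hπb : ((π : ℂ) / ((1 / (2 * (v:ℝ)) : ℝ) : ℂ)) = ((2 * π * v : ℝ) : ℂ) := by
    push_cast
    field_simp
  rw [hπb]
  have hcpow : ((2 * π * v : ℝ) : ℂ) ^ (1 / 2 : ℂ) = ((√(2 * π * v) : ℝ) : ℂ) := by
    rw [Real.sqrt_eq_rpow, Complex.ofReal_cpow h2v.le]
    norm_num
  rw [hcpow]
  rw [← smul_mul_assoc]
  have h1 : ((√(2 * π * v))⁻¹ : ℝ) • ((√(2 * π * v) : ℝ) : ℂ) = 1 := by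
    rw [Complex.real_smul, ← Complex.ofReal_mul, inv_mul_cancel₀ (by positivity)]
    simp
  rw [h1, one_mul]
  congr 1
  have hvne : (v:ℂ) ≠ 0 := by exact_mod_cast hvpos.ne'
  push_cast
  field_simp
  ring

variable {Ω ι κ β : Type*} [MeasurableSpace Ω] {μ : MeasureTheory.Measure Ω}

lemma iIndepFun_precomp {mβ : MeasurableSpace β} {f : ι → Ω → β} (g : κ → ι)
    (hg : Function.Injective g) (h : iIndepFun f μ) :
    iIndepFun (fun k => f (g k)) μ := by
  classical
  rw [iIndepFun_iff] at h ⊢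
  intro s f' hf'
  set F : ι → Set Ω := Function.extend g f' (fun _ => Set.univ) with hF
  have hFg : ∀ k, F (g k) = f' k := fun k => hg.extend_apply _ _ _
  have h1 : (⋂ i ∈ s, f' i) = ⋂ i ∈ s.image g, F i := by
    rw [Finset.set_biInter_finset_image]
    exact Set.iInter₂_congr fun k _ => (hFg k).symm
  have h2 : μ (⋂ i ∈ s.image g, F i) = ∏ i ∈ s.image g, μ (F i) := by
    refine h (s.image g) ?_
    intro i hi
    obtain ⟨k, hk, rfl⟩ := Finset.mem_image.1 hi
    rw [hFg]
    exact hf' k hk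
  rw [h1, h2, Finset.prod_image (fun a _ b _ hab => hg hab)]
  exact Finset.prod_congr rfl fun k _ => by rw [hFg]

lemma biInter_ae_eq {l : Filter Ω} (s : Finset ι) {f g : ι → Set Ω}
    (h : ∀ i ∈ s, f i =ᶠ[l] g i) : (⋂ i ∈ s, f i : Set Ω) =ᶠ[l] (⋂ i ∈ s, g i : Set Ω) := by
  classical
  induction s using Finset.induction with
  | empty => simp
  | insert a s ha ih =>
    rw [Finset.set_biInter_insert, Finset.set_biInter_insert]
    exact (h _ (Finset.mem_insert_self _ _)).inter
      (ih fun i hi => h i (Finset.mem_insert_of_mem hi))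

lemma iIndepFun_congr {mβ : MeasurableSpace β} {f g : ι → Ω → β}
    (h : iIndepFun f μ) (hfg : ∀ i, f i =ᵐ[μ] g i) :
    iIndepFun g μ := by
  classical
  rw [iIndepFun_iff] at h ⊢
  intro s f' hf'
  have hf'' : ∀ i, ∃ A : Set β, i ∈ s → MeasurableSet A ∧ g i ⁻¹' A = f' i := by
    intro i
    by_cases hi : i ∈ s
    · obtain ⟨A, hA, hA2⟩ := hf' i hi
      exact ⟨A, fun _ => ⟨hA, hA2⟩⟩
    · exact ⟨Set.univ, fun h' => absurd h' hi⟩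
  choose A hA using hf''
  have hae : ∀ i ∈ s, f' i =ᵐ[μ] f i ⁻¹' A i := by
    intro i hi
    rw [← (hA i hi).2]
    filter_upwards [hfg i] with ω hω
    show (ω ∈ g i ⁻¹' A i) = (ω ∈ f i ⁻¹' A i)
    simp only [Set.mem_preimage, hω]
  have h1 : μ (⋂ i ∈ s, f' i) = μ (⋂ i ∈ s, f i ⁻¹' A i) :=
    measure_congr (biInter_ae_eq s hae)
  have h2 := h s (f' := fun i => f i ⁻¹' A i)
    (fun i hi => ⟨A i, (hA i hi).1, rfl⟩)
  rw [h1, h2]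
  exact Finset.prod_congr rfl fun i hi => (measure_congr (hae i hi)).symm

variable {Ω : Type*} [MeasurableSpace Ω] {μ : MeasureTheory.Measure Ω}

lemma ProbabilityTheory.IndepFun.integral_mul_complex {X Y : Ω → ℂ} (h : IndepFun X Y μ)
    (hX : Integrable X μ) (hY : Integrable Y μ) :
    ∫ ω, X ω * Y ω ∂μ = (∫ ω, X ω ∂μ) * ∫ ω, Y ω ∂μ := by
  have hXY : Integrable (fun ω => X ω * Y ω) μ := h.integrable_mul hX hY
  have hrr : IndepFun (fun ω => (X ω).re) (fun ω => (Y ω).re) μ :=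
    h.comp Complex.measurable_re Complex.measurable_re
  have hri : IndepFun (fun ω => (X ω).re) (fun ω => (Y ω).im) μ :=
    h.comp Complex.measurable_re Complex.measurable_im
  have hir : IndepFun (fun ω => (X ω).im) (fun ω => (Y ω).re) μ :=
    h.comp Complex.measurable_im Complex.measurable_re
  have hii : IndepFun (fun ω => (X ω).im) (fun ω => (Y ω).im) μ :=
    h.comp Complex.measurable_im Complex.measurable_im
  have iXr : Integrable (fun ω => (X ω).re) μ := hX.re
  have iXi : Integrable (fun ω => (X ω).im) μ := hX.im
  have iYr : Integrable (fun ω => (Y ω).re) μ := hY.re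
  have iYi : Integrable (fun ω => (Y ω).im) μ := hY.im
  have e1 : ∫ ω, (X ω).re * (Y ω).re ∂μ = (∫ ω, (X ω).re ∂μ) * ∫ ω, (Y ω).re ∂μ :=
    hrr.integral_fun_mul_eq_mul_integral iXr.aestronglyMeasurable iYr.aestronglyMeasurable
  have e2 : ∫ ω, (X ω).re * (Y ω).im ∂μ = (∫ ω, (X ω).re ∂μ) * ∫ ω, (Y ω).im ∂μ :=
    hri.integral_fun_mul_eq_mul_integral iXr.aestronglyMeasurable iYi.aestronglyMeasurable
  have e3 : ∫ ω, (X ω).im * (Y ω).re ∂μ = (∫ ω, (X ω).im ∂μ) * ∫ ω, (Y ω).re ∂μ :=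
    hir.integral_fun_mul_eq_mul_integral iXi.aestronglyMeasurable iYr.aestronglyMeasurable
  have e4 : ∫ ω, (X ω).im * (Y ω).im ∂μ = (∫ ω, (X ω).im ∂μ) * ∫ ω, (Y ω).im ∂μ :=
    hii.integral_fun_mul_eq_mul_integral iXi.aestronglyMeasurable iYi.aestronglyMeasurable
  have hXre : (∫ ω, X ω ∂μ).re = ∫ ω, (X ω).re ∂μ := by
    rw [← RCLike.re_to_complex, ← integral_re hX]; rfl
  have hXim : (∫ ω, X ω ∂μ).im = ∫ ω, (X ω).im ∂μ := by
    rw [← RCLike.im_to_complex, ← integral_im hX]; rfl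
  have hYre : (∫ ω, Y ω ∂μ).re = ∫ ω, (Y ω).re ∂μ := by
    rw [← RCLike.re_to_complex, ← integral_re hY]; rfl
  have hYim : (∫ ω, Y ω ∂μ).im = ∫ ω, (Y ω).im ∂μ := by
    rw [← RCLike.im_to_complex, ← integral_im hY]; rfl
  have irr : Integrable (fun ω => (X ω).re * (Y ω).re) μ := hrr.integrable_mul iXr iYr
  have iri : Integrable (fun ω => (X ω).re * (Y ω).im) μ := hri.integrable_mul iXr iYi
  have iir : Integrable (fun ω => (X ω).im * (Y ω).re) μ := hir.integrable_mul iXi iYr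
  have iii : Integrable (fun ω => (X ω).im * (Y ω).im) μ := hii.integrable_mul iXi iYi
  apply Complex.ext
  · rw [← RCLike.re_to_complex, ← integral_re hXY]
    have hpt : ∀ ω, RCLike.re (X ω * Y ω) = (X ω).re * (Y ω).re - (X ω).im * (Y ω).im := by
      intro ω; simp [Complex.mul_re]
    rw [integral_congr_ae (ae_of_all _ hpt), integral_sub irr iii, e1, e4,
      Complex.mul_re, hXre, hXim, hYre, hYim]
  · rw [← RCLike.im_to_complex, ← integral_im hXY]
    have hpt : ∀ ω, RCLike.im (X ω * Y ω) = (X ω).re * (Y ω).im + (X ω).im * (Y ω).re := by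
      intro ω; simp [Complex.mul_im]
    rw [integral_congr_ae (ae_of_all _ hpt), integral_add iri iir, e2, e3,
      Complex.mul_im, hXre, hXim, hYre, hYim]

section Helpers
variable {Ω ι κ β : Type*} [MeasurableSpace Ω] {μ : MeasureTheory.Measure Ω}

lemma integrable_of_bound_one' [IsProbabilityMeasure μ] {h : Ω → ℂ} (hm : Measurable h)
    (hb : ∀ ω, ‖h ω‖ ≤ 1) : Integrable h μ :=
  Integrable.mono' (integrable_const 1) hm.aestronglyMeasurable (ae_of_all _ hb)

lemma integral_prod_of_indep [IsProbabilityMeasure μ] (Y : ι → Ω → ℝ)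
    (hmeas : ∀ i, Measurable (Y i))
    (hindep : iIndepFun Y μ) (g : ι → ℝ → ℂ)
    (hg : ∀ i, Measurable (g i)) (hgb : ∀ i x, ‖g i x‖ ≤ 1) (s : Finset ι) :
    ∫ ω, ∏ i ∈ s, g i (Y i ω) ∂μ = ∏ i ∈ s, ∫ ω, g i (Y i ω) ∂μ := by
  classical
  induction s using Finset.induction with
  | empty => simp
  | @insert a s ha ih =>
    have hcomp : iIndepFun (fun i => g i ∘ Y i) μ :=
      hindep.comp g hg
    have hI : IndepFun (∏ j ∈ s, (g j ∘ Y j)) (g a ∘ Y a) μ :=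
      hcomp.indepFun_finsetProd_of_notMem (fun i => (hg i).comp (hmeas i)) ha
    have hint1 : Integrable (fun ω => ∏ j ∈ s, g j (Y j ω)) μ := by
      refine integrable_of_bound_one' (by fun_prop) fun ω => ?_
      calc ‖∏ j ∈ s, g j (Y j ω)‖ = ∏ j ∈ s, ‖g j (Y j ω)‖ := by rw [norm_prod]
        _ ≤ 1 := Finset.prod_le_one (fun _ _ => norm_nonneg _) fun j _ => hgb j _
    have hint2 : Integrable (fun ω => g a (Y a ω)) μ :=
      integrable_of_bound_one' ((hg a).comp (hmeas a)) fun ω => hgb a _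
    have hfun : (∏ j ∈ s, (g j ∘ Y j)) = fun ω => ∏ j ∈ s, g j (Y j ω) :=
      funext fun ω => by simp
    have hint1' : Integrable (∏ j ∈ s, (g j ∘ Y j)) μ := hfun ▸ hint1
    have heq0 := hI.symm.integral_mul_complex hint2 hint1'
    rw [hfun] at heq0
    simp only [Function.comp] at heq0
    simp only [Finset.prod_insert ha]
    rw [← ih]
    exact heq0
end Helpers

lemma cos_core {d D : ℕ} {Ω : Type*} [MeasurableSpace Ω] (μ : MeasureTheory.Measure Ω)
    [IsProbabilityMeasure μ]
    (X : Fin D × Fin d → Ω → ℝ) (hXm : ∀ p, Measurable (X p))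
    (hXindep : iIndepFun X μ)
    {v : NNReal} (hv : v ≠ 0)
    (hXg : ∀ p, MeasureTheory.Measure.map (X p) μ = gaussianReal 0 v)
    (z : Fin d → ℝ) (l : Fin D) :
    ∫ ω, Real.cos (∑ j, X (l, j) ω * z j) ∂μ
      = Real.exp (-(v:ℝ) * (∑ j, (z j)^2) / 2) := by
  have hsub : iIndepFun (fun j => X (l, j)) μ :=
    iIndepFun_precomp (fun j => (l, j)) (fun a b h => by simpa using h) hXindep
  set g : Fin d → ℝ → ℂ := fun j x => Complex.exp ((x * z j : ℝ) * Complex.I) with hgdef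
  have hg : ∀ j, Measurable (g j) := by
    intro j
    apply Complex.measurable_exp.comp
    fun_prop
  have hgb : ∀ j x, ‖g j x‖ = 1 := by
    intro j x
    rw [hgdef]
    simp [Complex.norm_exp]
  have hpt : ∀ ω, Real.cos (∑ j, X (l, j) ω * z j)
      = (∏ j, g j (X (l, j) ω)).re := by
    intro ω
    have : (∏ j, g j (X (l, j) ω))
        = Complex.exp (((∑ j, X (l, j) ω * z j : ℝ)) * Complex.I) := by
      rw [hgdef, ← Complex.exp_sum]
      congr 1
      push_cast
      rw [Finset.sum_mul]
    rw [this, Complex.exp_ofReal_mul_I_re]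
  have hint : Integrable (fun ω => ∏ j, g j (X (l, j) ω)) μ := by
    refine integrable_of_bound_one' (by fun_prop) fun ω => ?_
    rw [norm_prod]
    exact Finset.prod_le_one (fun _ _ => norm_nonneg _) fun j _ => (hgb j _).le
  calc ∫ ω, Real.cos (∑ j, X (l, j) ω * z j) ∂μ
      = ∫ ω, (∏ j, g j (X (l, j) ω)).re ∂μ := by
        exact integral_congr_ae (ae_of_all _ hpt)
    _ = (∫ ω, ∏ j, g j (X (l, j) ω) ∂μ).re := by
        rw [← RCLike.re_to_complex, ← integral_re hint]; rfl
    _ = (∏ j, ∫ ω, g j (X (l, j) ω) ∂μ).re := by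
        rw [integral_prod_of_indep _ (fun j => hXm _) hsub g hg
          (fun j x => (hgb j x).le)]
    _ = Real.exp (-(v:ℝ) * (∑ j, (z j)^2) / 2) := by
        have hone : ∀ j : Fin d, ∫ ω, g j (X (l, j) ω) ∂μ
            = Complex.exp (-(v : ℝ) * (z j) ^ 2 / 2) := by
          intro j
          rw [hgdef]
          have := gauss_char hv (z j)
          rw [← hXg (l, j), integral_map (hXm (l, j)).aemeasurable
            ((hg j).aestronglyMeasurable)] at this
          exact this
        rw [Finset.prod_congr rfl fun j _ => hone j, ← Complex.exp_sum]
        have : (∑ j, -(v : ℝ) * ((z j):ℂ) ^ 2 / 2)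
            = (((-(v:ℝ) * (∑ j, (z j)^2) / 2 : ℝ)) : ℂ) := by
          push_cast
          rw [Finset.mul_sum, Finset.sum_div]
        rw [this, Complex.exp_ofReal_re]

end RFAHelpers

set_option maxHeartbeats 1000000

/-- The numerator and denominator of RFA are unbiased estimators of the numerator and
denominator of softmax attention, up to the common positive factor `exp(−1/σ²)`:
`E[∑ᵢ (φ(q)·φ(kᵢ)) vᵢ] = exp(−1/σ²) ∑ᵢ exp(q·kᵢ/σ²) vᵢ` and
`E[φ(q) · ∑ⱼ φ(kⱼ)] = exp(−1/σ²) ∑ⱼ exp(q·kⱼ/σ²)`. -/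
theorem rfa_unbiased_numerator_denominator {d D M : ℕ} (hD : 1 ≤ D) (σ : ℝ) (hσ : 0 < σ)
    {Ω : Type*} [MeasurableSpace Ω] (μ : Measure Ω) [IsProbabilityMeasure μ]
    (W : Fin D → Ω → EuclideanSpace ℝ (Fin d))
    (hindep : iIndepFun
      (fun (p : Fin D × Fin d) ω => W p.1 ω p.2) μ)
    (hgauss : ∀ (i : Fin D) (j : Fin d),
      Measure.map (fun ω => W i ω j) μ = gaussianReal 0 ⟨1 / σ ^ 2, by positivity⟩)
    (q : EuclideanSpace ℝ (Fin d)) (k : Fin M → EuclideanSpace ℝ (Fin d))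
    (v : Fin M → EuclideanSpace ℝ (Fin d))
    (hq : ‖q‖ = 1) (hk : ∀ i, ‖k i‖ = 1) :
    (∫ ω, (∑ i : Fin M,
        ⟪randomFeatureMap (fun l => W l ω) q, randomFeatureMap (fun l => W l ω) (k i)⟫ • v i) ∂μ
      = Real.exp (-1 / σ ^ 2) • ∑ i : Fin M, Real.exp (⟪q, k i⟫ / σ ^ 2) • v i) ∧
    (∫ ω, ⟪randomFeatureMap (fun l => W l ω) q,
        ∑ j : Fin M, randomFeatureMap (fun l => W l ω) (k j)⟫ ∂μ
      = Real.exp (-1 / σ ^ 2) * ∑ j : Fin M, Real.exp (⟪q, k j⟫ / σ ^ 2)) := by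
  have hD0 : (D : ℝ) ≠ 0 := Nat.cast_ne_zero.2 (by omega)
  set vr : NNReal := ⟨1 / σ ^ 2, by positivity⟩ with hvr
  have hv : vr ≠ 0 := by
    intro h
    have : (vr : ℝ) = 0 := by rw [h]; simp
    rw [hvr] at this
    exact (by positivity : (0:ℝ) < 1 / σ ^ 2).ne' this
  have hvrc : (vr : ℝ) = 1 / σ ^ 2 := rfl
  -- measurable modifications
  have hAE : ∀ p : Fin D × Fin d, AEMeasurable (fun ω => W p.1 ω p.2) μ := by
    intro p
    by_contra h
    have := hgauss p.1 p.2
    rw [MeasureTheory.Measure.map_of_not_aemeasurable h] at this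
    exact (IsProbabilityMeasure.ne_zero (gaussianReal 0 vr)) this.symm
  set X : Fin D × Fin d → Ω → ℝ := fun p => (hAE p).mk _ with hXdef
  have hXm : ∀ p, Measurable (X p) := fun p => (hAE p).measurable_mk
  have hXeq : ∀ p : Fin D × Fin d, (fun ω => W p.1 ω p.2) =ᵐ[μ] X p :=
    fun p => (hAE p).ae_eq_mk
  have hXindep : iIndepFun X μ :=
    iIndepFun_congr hindep hXeq
  have hXg : ∀ p, MeasureTheory.Measure.map (X p) μ = gaussianReal 0 vr := by
    intro p
    rw [← MeasureTheory.Measure.map_congr (hXeq p)]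
    exact hgauss p.1 p.2
  have hae_all : ∀ᵐ ω ∂μ, ∀ p : Fin D × Fin d, W p.1 ω p.2 = X p ω := by
    rw [MeasureTheory.ae_all_iff]
    exact fun p => hXeq p
  -- deterministic identity
  have hdet : ∀ (w : Fin D → EuclideanSpace ℝ (Fin d)) (a b : EuclideanSpace ℝ (Fin d)),
      ⟪randomFeatureMap w a, randomFeatureMap w b⟫
        = (1 / D : ℝ) * ∑ l : Fin D, Real.cos ⟪w l, a - b⟫ := by
    intro w a b
    have hsq : Real.sqrt (1 / D) * Real.sqrt (1 / D) = (1 / D : ℝ) :=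
      Real.mul_self_sqrt (by positivity)
    rw [show randomFeatureMap w a = WithLp.toLp 2 (fun i => Real.sqrt (1 / D) *
      Sum.elim (fun j => Real.sin ⟪w j, a⟫) (fun j => Real.cos ⟪w j, a⟫) i) from rfl,
      show randomFeatureMap w b = WithLp.toLp 2 (fun i => Real.sqrt (1 / D) *
      Sum.elim (fun j => Real.sin ⟪w j, b⟫) (fun j => Real.cos ⟪w j, b⟫) i) from rfl]
    rw [PiLp.inner_apply]
    rw [Fintype.sum_sum_type]
    simp only [Sum.elim_inl, Sum.elim_inr, RCLike.inner_apply, starRingEnd_apply, star_trivial]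
    rw [← Finset.sum_add_distrib, Finset.mul_sum]
    refine Finset.sum_congr rfl fun l _ => ?_
    rw [inner_sub_right (𝕜 := ℝ), Real.cos_sub]
    linear_combination (Real.sin ⟪w l, a⟫ * Real.sin ⟪w l, b⟫ +
      Real.cos ⟪w l, a⟫ * Real.cos ⟪w l, b⟫) * hsq
  -- coordinate expansion of the inner product
  have hcoord : ∀ (x y : EuclideanSpace ℝ (Fin d)), ⟪x, y⟫ = ∑ j, x j * y j := by
    intro x y
    rw [PiLp.inner_apply]
    simp [RCLike.inner_apply, mul_comm]
  -- scalar core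
  have hscalar : ∀ k' : EuclideanSpace ℝ (Fin d), ‖k'‖ = 1 →
      Integrable (fun ω => ⟪randomFeatureMap (fun l => W l ω) q,
        randomFeatureMap (fun l => W l ω) k'⟫) μ ∧
      ∫ ω, ⟪randomFeatureMap (fun l => W l ω) q,
        randomFeatureMap (fun l => W l ω) k'⟫ ∂μ
        = Real.exp (-1 / σ ^ 2) * Real.exp (⟪q, k'⟫ / σ ^ 2) := by
    intro k' hk'
    set z : Fin d → ℝ := fun j => q j - k' j with hzdef
    set g : Ω → ℝ := fun ω => (1 / D : ℝ) * ∑ l : Fin D,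
      Real.cos (∑ j, X (l, j) ω * z j) with hgdef
    have hcongr : (fun ω => ⟪randomFeatureMap (fun l => W l ω) q,
        randomFeatureMap (fun l => W l ω) k'⟫) =ᵐ[μ] g := by
      filter_upwards [hae_all] with ω hω
      rw [hdet, hgdef]
      congr 1
      refine Finset.sum_congr rfl fun l _ => ?_
      congr 1
      rw [hcoord]
      refine Finset.sum_congr rfl fun j _ => ?_
      rw [← hω (l, j)]
      rfl
    have hgmeas : Measurable g := by
      apply Measurable.const_mul
      exact Finset.measurable_sum _ fun l _ =>
        (Real.continuous_cos.measurable).comp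
          (Finset.measurable_sum _ fun j _ => (hXm (l, j)).mul_const _)
    have hgbdd : ∀ ω, ‖g ω‖ ≤ 1 := by
      intro ω
      rw [hgdef]
      rw [Real.norm_eq_abs, abs_mul, _root_.abs_of_nonneg (by positivity : (0:ℝ) ≤ 1 / D)]
      calc (1 / D : ℝ) * |∑ l : Fin D, Real.cos (∑ j, X (l, j) ω * z j)|
          ≤ (1 / D : ℝ) * ∑ l : Fin D, 1 := by
            refine mul_le_mul_of_nonneg_left ?_ (by positivity)
            refine (Finset.abs_sum_le_sum_abs _ _).trans ?_
            exact Finset.sum_le_sum fun l _ => Real.abs_cos_le_one _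
        _ = 1 := by
            simp only [Finset.sum_const, Finset.card_univ, Fintype.card_fin, nsmul_eq_mul,
              mul_one]
            field_simp
    have hgint : Integrable g μ :=
      Integrable.mono' (integrable_const 1) hgmeas.aestronglyMeasurable (ae_of_all _ hgbdd)
    have hint : Integrable (fun ω => ⟪randomFeatureMap (fun l => W l ω) q,
        randomFeatureMap (fun l => W l ω) k'⟫) μ := hgint.congr hcongr.symm
    refine ⟨hint, ?_⟩
    rw [integral_congr_ae hcongr, hgdef]
    have hcosint : ∀ l : Fin D, Integrable (fun ω => Real.cos (∑ j, X (l, j) ω * z j)) μ := by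
      intro l
      refine Integrable.mono' (integrable_const 1) ?_ (ae_of_all _ fun ω => ?_)
      · exact ((Real.continuous_cos.measurable).comp
          (Finset.measurable_sum _ fun j _ => (hXm (l, j)).mul_const _)).aestronglyMeasurable
      · rw [Real.norm_eq_abs]; exact Real.abs_cos_le_one _
    rw [integral_const_mul, integral_finset_sum _ fun l _ => hcosint l]
    have hval : ∀ l : Fin D, ∫ ω, Real.cos (∑ j, X (l, j) ω * z j) ∂μ
        = Real.exp (-(vr:ℝ) * (∑ j, (z j)^2) / 2) :=
      fun l => cos_core μ X hXm hXindep hv hXg z l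
    rw [Finset.sum_congr rfl fun l _ => hval l]
    simp only [Finset.sum_const, Finset.card_univ, Fintype.card_fin, nsmul_eq_mul]
    have hDcancel : (1 / D : ℝ) * ((D : ℝ) * Real.exp (-(vr:ℝ) * (∑ j, (z j)^2) / 2))
        = Real.exp (-(vr:ℝ) * (∑ j, (z j)^2) / 2) := by
      field_simp
    rw [hDcancel]
    -- now compute the exponent
    have hzsum : (∑ j, (z j)^2) = ‖q - k'‖ ^ 2 := by
      rw [← real_inner_self_eq_norm_sq, hcoord]
      refine Finset.sum_congr rfl fun j _ => ?_
      have : (q - k') j = q j - k' j := rfl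
      rw [this, hzdef]
      ring
    rw [hzsum, norm_sub_sq_real, hq, hk', hvrc]
    rw [← Real.exp_add]
    congr 1
    have hσ2 : σ ^ 2 ≠ 0 := by positivity
    field_simp
    ring
  constructor
  · rw [integral_finset_sum _ fun i _ => ((hscalar (k i) (hk i)).1).smul_const (v i)]
    rw [Finset.smul_sum]
    refine Finset.sum_congr rfl fun i _ => ?_
    rw [integral_smul_const, (hscalar (k i) (hk i)).2, smul_smul]
  · have hptw : ∀ ω, ⟪randomFeatureMap (fun l => W l ω) q,
        ∑ j : Fin M, randomFeatureMap (fun l => W l ω) (k j)⟫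
        = ∑ j : Fin M, ⟪randomFeatureMap (fun l => W l ω) q,
            randomFeatureMap (fun l => W l ω) (k j)⟫ := by
      intro ω
      exact inner_sum _ _ _
    rw [integral_congr_ae (ae_of_all _ hptw),
      integral_finset_sum _ fun j _ => (hscalar (k j) (hk j)).1, Finset.mul_sum]
    exact Finset.sum_congr rfl fun j _ => (hscalar (k j) (hk j)).2
end
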